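/- For every k ≥ 1, the two-variable exponential generating function of the numbers T(n,k,r) satisfies, as an identity of formal power series in ℚ[[x,y]]: ∑_{n,r≥0} T(n,k,r) (x^n/n!) y^r = exp^{(k)}(x,y). -/

import Mathlib

open Finset

/-- Stirling numbers of the second kind: the number of partitions (equivalence
relations) of an `n`-element set into `r` nonempty blocks. -/
noncomputable def stirS2 (n r : ℕ) : ℕ :=
  Nat.card {p : Setoid (Fin n) // Nat.card (Quotient p) = r}

instance setoidFinite {α : Type*} [Finite α] : Finite (Setoid α) :=
  Finite.of_injective (fun p : Setoid α => p.r)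
    (fun p q h => Setoid.ext fun a b => iff_of_eq (congrFun (congrFun h a) b))


noncomputable def kerEquiv {α β : Type*} (p : Setoid α) :
    {f : α → β // Setoid.ker f = p} ≃ (Quotient p ↪ β) where
  toFun f := ⟨Quotient.lift f.1 (fun a b h => by
      have h' : p.r a b := h
      rw [← f.2] at h'
      exact h'), fun x y hxy => by
      induction x using Quotient.ind
      induction y using Quotient.ind
      refine Quotient.sound ?_
      rename_i a b
      have h' : (Setoid.ker f.1).r a b := hxy
      rw [f.2] at h'
      exact h'⟩
  invFun e := ⟨fun a => e (Quotient.mk p a), Setoid.ext fun a b => by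
      constructor
      · intro h; exact Quotient.exact (e.injective h)
      · intro h; exact congrArg e (Quotient.sound h)⟩
  left_inv f := Subtype.ext rfl
  right_inv e := DFunLike.ext _ _ fun x => by
      induction x using Quotient.ind
      rfl


lemma card_quot_le {n : ℕ} (p : Setoid (Fin n)) : Nat.card (Quotient p) ≤ n := by
  simpa using Nat.card_le_card_of_surjective (Quotient.mk p) Quotient.mk_surjective


lemma stirS2_eq_zero {n r : ℕ} (h : n < r) : stirS2 n r = 0 := by
  have : IsEmpty {p : Setoid (Fin n) // Nat.card (Quotient p) = r} := by
    constructor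
    rintro ⟨p, hp⟩
    exact absurd (hp ▸ card_quot_le p) (by omega)
  simp [stirS2, Nat.card_of_isEmpty]


lemma pow_eq_sum_stirS2 (n j : ℕ) :
    j ^ n = ∑ m ∈ range (n + 1), stirS2 n m * j.descFactorial m := by
  classical
  letI : Fintype (Setoid (Fin n)) := Fintype.ofFinite _
  letI : ∀ p : Setoid (Fin n), Fintype (Quotient p) := fun p => Fintype.ofFinite _
  have e : (Fin n → Fin j) ≃ Σ p : Setoid (Fin n), (Quotient p ↪ Fin j) :=
    (Equiv.sigmaFiberEquiv (Setoid.ker : (Fin n → Fin j) → Setoid (Fin n))).symm.trans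
      (Equiv.sigmaCongrRight fun p => kerEquiv p)
  have h1 : j ^ n = ∑ p : Setoid (Fin n), Fintype.card (Quotient p ↪ Fin j) := by
    rw [← Fintype.card_sigma, ← Fintype.card_congr e]
    simp [Fintype.card_fun]
  have h2 : ∀ p : Setoid (Fin n), Fintype.card (Quotient p ↪ Fin j)
      = j.descFactorial (Nat.card (Quotient p)) := fun p => by
    rw [Fintype.card_embedding_eq, Fintype.card_fin, Nat.card_eq_fintype_card]
  rw [h1]
  simp_rw [h2]
  rw [← Finset.sum_fiberwise_of_maps_to (g := fun p : Setoid (Fin n) => Nat.card (Quotient p))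
      (t := range (n + 1)) (fun p _ => by rw [Finset.mem_range, Nat.lt_succ_iff]; exact card_quot_le p)]
  refine Finset.sum_congr rfl fun m _ => ?_
  rw [Finset.sum_congr rfl (fun p hp => by
      rw [(Finset.mem_filter.mp hp).2]), Finset.sum_const, smul_eq_mul]
  congr 1
  rw [stirS2, Nat.card_eq_fintype_card, Fintype.card_subtype]


/-- Signed Stirling numbers of the first kind, defined by
`x(x-1)⋯(x-n+1) = ∑_{r=0}^{n} s(n,r) xʳ`. -/
noncomputable def stirS1 (n r : ℕ) : ℤ :=
  (∏ i ∈ Finset.range n, (Polynomial.X - Polynomial.C (i : ℤ))).coeff r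

/-- `Tnum n k r = T(n,k,r) = ∑_{n ≥ i_1 ≥ … ≥ i_{k-1} ≥ r} ∏_{j=1}^{k} S(i_{j-1}, i_j)`
(with `i_0 = n`, `i_k = r`), written via the equivalent recursion on `k`. -/
noncomputable def Tnum : ℕ → ℕ → ℕ → ℕ
  | n, 0, r => if n = r then 1 else 0
  | n, k + 1, r => ∑ m ∈ Finset.Icc r n, stirS2 n m * Tnum m k r

/-- `tnum n k r = t(n,k,r) = ∑_{n ≥ i_1 ≥ … ≥ i_{k-1} ≥ r} ∏_{j=1}^{k} s(i_{j-1}, i_j)`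
(with `i_0 = n`, `i_k = r`), written via the equivalent recursion on `k`. -/
noncomputable def tnum : ℕ → ℕ → ℕ → ℤ
  | n, 0, r => if n = r then 1 else 0
  | n, k + 1, r => ∑ m ∈ Finset.Icc r n, stirS1 n m * tnum m k r

/-- Composition `f(g(x))` of formal power series, for `g` with zero constant
term (so that `coeff d (g^m) = 0` for `m > d` and the sum below is the full
composition). -/
noncomputable def comp1 (f g : PowerSeries ℚ) : PowerSeries ℚ :=
  PowerSeries.mk fun d => ∑ m ∈ Finset.range (d + 1),
    PowerSeries.coeff m f * PowerSeries.coeff d (g ^ m)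

lemma coeff_comp1 (f g : PowerSeries ℚ) (d : ℕ) :
    PowerSeries.coeff d (comp1 f g) = ∑ m ∈ Finset.range (d + 1),
      PowerSeries.coeff m f * PowerSeries.coeff d (g ^ m) :=
  PowerSeries.coeff_mk _ _


lemma coeff_pow_eq_zero {g : PowerSeries ℚ} (hg : PowerSeries.constantCoeff g = 0)
    {d m : ℕ} (h : d < m) : PowerSeries.coeff d (g ^ m) = 0 := by
  have hX : (PowerSeries.X : PowerSeries ℚ) ∣ g := PowerSeries.X_dvd_iff.mpr hg
  obtain ⟨h', hh⟩ := pow_dvd_pow_of_dvd hX m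
  rw [hh]
  rw [mul_comm, PowerSeries.coeff_mul_X_pow', if_neg (not_le.mpr h)]


lemma comp1_one (g : PowerSeries ℚ) : comp1 1 g = 1 := by
  ext d
  rw [coeff_comp1]
  simp [PowerSeries.coeff_one, ite_mul, Finset.sum_ite_eq']


lemma comp1_sub (f f' g : PowerSeries ℚ) : comp1 (f - f') g = comp1 f g - comp1 f' g := by
  ext d
  simp [coeff_comp1, sub_mul, Finset.sum_sub_distrib]


lemma comp1_mul {g : PowerSeries ℚ} (hg : PowerSeries.constantCoeff g = 0)
    (f f' : PowerSeries ℚ) : comp1 (f * f') g = comp1 f g * comp1 f' g := by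
  ext d
  have key : ∀ G : ℕ × ℕ → ℚ, (∀ x : ℕ × ℕ, d < x.1 + x.2 → G x = 0) →
      ∑ q ∈ range (d + 1), ∑ x ∈ HasAntidiagonal.antidiagonal q, G x
        = ∑ x ∈ range (d + 1) ×ˢ range (d + 1), G x := by
    intro G hG
    have hfib : ∀ q ∈ range (d + 1), ∑ x ∈ HasAntidiagonal.antidiagonal q, G x
        = ∑ x ∈ ((range (d + 1) ×ˢ range (d + 1)).filter fun x => x.1 + x.2 ≤ d).filter
            (fun x => x.1 + x.2 = q), G x := by
      intro q hq
      rw [Finset.mem_range] at hq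
      apply Finset.sum_congr _ (fun _ _ => rfl)
      ext x
      simp only [HasAntidiagonal.mem_antidiagonal, Finset.mem_filter, Finset.mem_product,
        Finset.mem_range]
      omega
    rw [Finset.sum_congr rfl hfib,
      Finset.sum_fiberwise_of_maps_to (fun x hx => by
        simp only [Finset.mem_filter] at hx
        rw [Finset.mem_range]; omega)]
    refine Finset.sum_subset (Finset.filter_subset _ _) fun x hx hx' => hG x ?_
    simp only [Finset.mem_filter, not_and] at hx'
    have := hx' hx
    omega
  rw [coeff_comp1, PowerSeries.coeff_mul]
  -- expand LHS
  have hL : ∀ q ∈ range (d + 1),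
      PowerSeries.coeff q (f * f') * PowerSeries.coeff d (g ^ q)
        = ∑ x ∈ HasAntidiagonal.antidiagonal q, ∑ y ∈ HasAntidiagonal.antidiagonal d,
            (PowerSeries.coeff x.1 f * PowerSeries.coeff y.1 (g ^ x.1)) *
            (PowerSeries.coeff x.2 f' * PowerSeries.coeff y.2 (g ^ x.2)) := by
    intro q _
    rw [PowerSeries.coeff_mul, Finset.sum_mul]
    refine Finset.sum_congr rfl fun x hx => ?_
    rw [HasAntidiagonal.mem_antidiagonal] at hx
    rw [← hx, pow_add, PowerSeries.coeff_mul, Finset.mul_sum]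
    exact Finset.sum_congr rfl fun y _ => by ring
  rw [Finset.sum_congr rfl hL]
  have hswap : ∑ q ∈ range (d + 1), ∑ x ∈ HasAntidiagonal.antidiagonal q,
      ∑ y ∈ HasAntidiagonal.antidiagonal d,
        (PowerSeries.coeff x.1 f * PowerSeries.coeff y.1 (g ^ x.1)) *
        (PowerSeries.coeff x.2 f' * PowerSeries.coeff y.2 (g ^ x.2))
      = ∑ y ∈ HasAntidiagonal.antidiagonal d, ∑ q ∈ range (d + 1), ∑ x ∈ HasAntidiagonal.antidiagonal q,
        (PowerSeries.coeff x.1 f * PowerSeries.coeff y.1 (g ^ x.1)) *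
        (PowerSeries.coeff x.2 f' * PowerSeries.coeff y.2 (g ^ x.2)) := by
    rw [Finset.sum_comm]
    exact Finset.sum_congr rfl fun q _ => Finset.sum_comm
  rw [hswap]
  refine Finset.sum_congr rfl fun y hy => ?_
  rw [HasAntidiagonal.mem_antidiagonal] at hy
  rw [key _ (fun x hx => by
    rcases Nat.lt_or_ge y.1 x.1 with h1 | h1
    · rw [coeff_pow_eq_zero hg h1]; ring
    · have h2 : y.2 < x.2 := by omega
      rw [coeff_pow_eq_zero hg h2]; ring)]
  rw [Finset.sum_product, coeff_comp1, coeff_comp1]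
  have hA : ∑ m ∈ range (y.1 + 1), PowerSeries.coeff m f * PowerSeries.coeff y.1 (g ^ m)
      = ∑ m ∈ range (d + 1), PowerSeries.coeff m f * PowerSeries.coeff y.1 (g ^ m) :=
    Finset.sum_subset (Finset.range_subset_range.mpr (by omega)) fun a _ ha => by
      rw [coeff_pow_eq_zero hg (by simp only [Finset.mem_range] at ha; omega), mul_zero]
  have hB : ∑ m ∈ range (y.2 + 1), PowerSeries.coeff m f' * PowerSeries.coeff y.2 (g ^ m)
      = ∑ m ∈ range (d + 1), PowerSeries.coeff m f' * PowerSeries.coeff y.2 (g ^ m) :=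
    Finset.sum_subset (Finset.range_subset_range.mpr (by omega)) fun a _ ha => by
      rw [coeff_pow_eq_zero hg (by simp only [Finset.mem_range] at ha; omega), mul_zero]
  rw [hA, hB, Finset.sum_mul_sum]


lemma comp1_pow {g : PowerSeries ℚ} (hg : PowerSeries.constantCoeff g = 0)
    (f : PowerSeries ℚ) (r : ℕ) : comp1 (f ^ r) g = comp1 f g ^ r := by
  induction r with
  | zero => simpa using comp1_one g
  | succ r ih => rw [pow_succ, pow_succ, comp1_mul hg, ih]


/-- Composition `f(g(x,y))` of a one-variable power series with a two-variable
power series `g` with zero constant term. -/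
noncomputable def comp2 (f : PowerSeries ℚ) (g : MvPowerSeries (Fin 2) ℚ) :
    MvPowerSeries (Fin 2) ℚ :=
  fun e => ∑ m ∈ Finset.range (e 0 + e 1 + 1),
    PowerSeries.coeff m f * MvPowerSeries.coeff e (g ^ m)

/-- The embedding `ℚ[[x]] → ℚ[[x,y]]`, `x ↦ x` (the variable `0`). -/
noncomputable def toX (f : PowerSeries ℚ) : MvPowerSeries (Fin 2) ℚ :=
  fun e => if e 1 = 0 then PowerSeries.coeff (e 0) f else 0

lemma coeff_toX (f : PowerSeries ℚ) (e : Fin 2 →₀ ℕ) :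
    MvPowerSeries.coeff e (toX f)
      = if e 1 = 0 then PowerSeries.coeff (e 0) f else 0 := rfl


lemma fin2_ext {e e' : Fin 2 →₀ ℕ} (h0 : e 0 = e' 0) (h1 : e 1 = e' 1) : e = e' :=
  Finsupp.ext fun i => by fin_cases i <;> assumption


lemma fin2_eq_single0 {e : Fin 2 →₀ ℕ} (h : e 1 = 0) :
    e = Finsupp.single 0 (e 0) :=
  fin2_ext (by simp) (by simp [h, Finsupp.single_apply])


lemma fin2_eq_zero_iff {e : Fin 2 →₀ ℕ} : e = 0 ↔ e 0 = 0 ∧ e 1 = 0 := by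
  constructor
  · rintro rfl; simp
  · rintro ⟨h0, h1⟩; exact fin2_ext (by simpa) (by simpa)


lemma toX_one : toX 1 = 1 := by
  ext e
  rw [coeff_toX, MvPowerSeries.coeff_one]
  by_cases h1 : e 1 = 0 <;> by_cases h0 : e 0 = 0 <;>
    simp [h0, h1, fin2_eq_zero_iff, PowerSeries.coeff_one]


lemma toX_mul (f g : PowerSeries ℚ) : toX (f * g) = toX f * toX g := by
  ext e
  rw [MvPowerSeries.coeff_mul, coeff_toX]
  by_cases h1 : e 1 = 0
  · rw [if_pos h1, PowerSeries.coeff_mul]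
    refine Finset.sum_nbij'
      (i := fun p : ℕ × ℕ => ((Finsupp.single 0 p.1 : Fin 2 →₀ ℕ), (Finsupp.single 0 p.2 : Fin 2 →₀ ℕ)))
      (j := fun q : (Fin 2 →₀ ℕ) × (Fin 2 →₀ ℕ) => (q.1 0, q.2 0))
      (fun p hp => ?_) (fun q hq => ?_) (fun p hp => ?_) (fun q hq => ?_) (fun p hp => ?_)
    · rw [HasAntidiagonal.mem_antidiagonal] at hp ⊢
      rw [← Finsupp.single_add, hp, ← fin2_eq_single0 h1]
    · rw [HasAntidiagonal.mem_antidiagonal] at hq ⊢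
      have := congrArg (fun x : Fin 2 →₀ ℕ => x 0) hq
      simpa using this
    · simp
    · rw [HasAntidiagonal.mem_antidiagonal] at hq
      have hq1 : q.1 1 = 0 ∧ q.2 1 = 0 := by
        have := congrArg (fun x : Fin 2 →₀ ℕ => x 1) hq
        simp only [Finsupp.add_apply] at this
        constructor <;> omega
      exact Prod.ext (fin2_eq_single0 hq1.1).symm (fin2_eq_single0 hq1.2).symm
    · rw [coeff_toX, coeff_toX]
      simp [Finsupp.single_apply]
  · rw [if_neg h1]
    refine (Finset.sum_eq_zero fun q hq => ?_).symm
    rw [HasAntidiagonal.mem_antidiagonal] at hq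
    have hsum : q.1 1 + q.2 1 = e 1 := by
      have := congrArg (fun x : Fin 2 →₀ ℕ => x 1) hq
      simpa using this
    rw [coeff_toX, coeff_toX]
    rcases Nat.eq_zero_or_pos (q.1 1) with h | h
    · have h2 : q.2 1 ≠ 0 := by omega
      rw [if_neg h2, mul_zero]
    · rw [if_neg (by omega), zero_mul]


lemma toX_pow (f : PowerSeries ℚ) : ∀ m, toX (f ^ m) = toX f ^ m
  | 0 => by rw [pow_zero, pow_zero, toX_one]
  | m + 1 => by rw [pow_succ, pow_succ, toX_mul, toX_pow f m]


lemma coeff_Ypow_mul_toX (h : PowerSeries ℚ) (m : ℕ) (e : Fin 2 →₀ ℕ) :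
    MvPowerSeries.coeff e ((MvPowerSeries.X 1 : MvPowerSeries (Fin 2) ℚ) ^ m * toX h)
      = if e 1 = m then PowerSeries.coeff (e 0) h else 0 := by
  rw [MvPowerSeries.X_pow_eq, MvPowerSeries.coeff_monomial_mul]
  by_cases hle : Finsupp.single (1 : Fin 2) m ≤ e
  · have hm : m ≤ e 1 := Finsupp.single_le_iff.mp hle
    have h0 : (e - Finsupp.single (1 : Fin 2) m) (0 : Fin 2) = e 0 := by
      rw [Finsupp.tsub_apply]
      simp [Finsupp.single_apply]
    have h1 : (e - Finsupp.single (1 : Fin 2) m) (1 : Fin 2) = e 1 - m := by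
      rw [Finsupp.tsub_apply]
      simp
    rw [if_pos hle, one_mul, coeff_toX, h0, h1]
    by_cases he : e 1 = m
    · rw [if_pos (by omega), if_pos he]
    · rw [if_neg (by omega), if_neg he]
  · rw [if_neg hle,
      if_neg (fun hem => hle (Finsupp.single_le_iff.mpr (le_of_eq hem.symm)))]


lemma G_pow (f : PowerSeries ℚ) (m : ℕ) :
    ((MvPowerSeries.X 1 : MvPowerSeries (Fin 2) ℚ) * toX f) ^ m
      = (MvPowerSeries.X 1 : MvPowerSeries (Fin 2) ℚ) ^ m * toX (f ^ m) := by
  rw [mul_pow, toX_pow]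


/-- `exp⁽⁰⁾(x) = eˣ - 1` and `exp⁽ᵏ⁾(x) = exp(exp⁽ᵏ⁻¹⁾(x)) - 1`. -/
noncomputable def expIter : ℕ → PowerSeries ℚ
  | 0 => PowerSeries.exp ℚ - 1
  | k + 1 => comp1 (PowerSeries.exp ℚ) (expIter k) - 1

lemma invert_aux (n : ℕ) (b s : ℕ → ℚ)
    (heq : ∀ j : ℕ, ∑ m ∈ range (n + 1), (j.choose m : ℚ) * b m
      = ∑ m ∈ range (n + 1), (j.choose m : ℚ) * s m) :
    ∀ j ≤ n, b j = s j := by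
  intro j
  induction j using Nat.strong_induction_on with
  | _ j ih =>
    intro hj
    have h0 : ∑ m ∈ range (n + 1), (j.choose m : ℚ) * (b m - s m) = 0 := by
      simp only [mul_sub, Finset.sum_sub_distrib, heq j, sub_self]
    rw [Finset.sum_eq_single j (fun m hm hmj => by
        rcases Nat.lt_or_ge m j with h | h
        · rw [ih m h (by rw [Finset.mem_range] at hm; omega), sub_self, mul_zero]
        · have : j < m := by omega
          rw [Nat.choose_eq_zero_of_lt this]
          simp)
      (fun h => absurd (Finset.mem_range.mpr (by omega)) h)] at h0
    rw [Nat.choose_self] at h0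
    have := h0
    simp only [Nat.cast_one, one_mul, sub_eq_zero] at this
    exact this


lemma constantCoeff_E0 : PowerSeries.constantCoeff (PowerSeries.exp ℚ - 1) = 0 := by
  rw [map_sub, PowerSeries.constantCoeff_exp, map_one, sub_self]


lemma base_coeff (n r : ℕ) :
    (n.factorial : ℚ) * PowerSeries.coeff n ((PowerSeries.exp ℚ - 1) ^ r)
      = r.factorial * stirS2 n r := by
  set b : ℕ → ℚ := fun m => (n.factorial : ℚ) *
    PowerSeries.coeff n ((PowerSeries.exp ℚ - 1) ^ m) with hbdef
  set s : ℕ → ℚ := fun m => (m.factorial : ℚ) * stirS2 n m with hsdef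
  have hb0 : ∀ m, n < m → b m = 0 := fun m hm => by
    simp only [hbdef, coeff_pow_eq_zero constantCoeff_E0 hm, mul_zero]
  have hs0 : ∀ m, n < m → s m = 0 := fun m hm => by
    simp only [hsdef, stirS2_eq_zero hm, Nat.cast_zero, mul_zero]
  have heq : ∀ j : ℕ, ∑ m ∈ range (n + 1), (j.choose m : ℚ) * b m
      = ∑ m ∈ range (n + 1), (j.choose m : ℚ) * s m := by
    intro j
    -- RHS = j^n
    have hrhs : ∑ m ∈ range (n + 1), (j.choose m : ℚ) * s m = (j : ℚ) ^ n := by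
      have hcast : (j : ℚ) ^ n
          = ∑ x ∈ range (n + 1), (stirS2 n x : ℚ) * (j.descFactorial x : ℚ) := by
        exact_mod_cast congrArg (Nat.cast : ℕ → ℚ) (pow_eq_sum_stirS2 n j)
      rw [hcast]
      refine Finset.sum_congr rfl fun m _ => ?_
      rw [Nat.descFactorial_eq_factorial_mul_choose, hsdef]
      push_cast
      ring
    -- LHS = j^n
    have hexp : PowerSeries.coeff n (PowerSeries.exp ℚ ^ j) = (j : ℚ) ^ n * (1 / n.factorial) := by
      rw [PowerSeries.exp_pow_eq_rescale_exp, PowerSeries.coeff_rescale, PowerSeries.coeff_exp]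
      simp
    have hbin : PowerSeries.coeff n (PowerSeries.exp ℚ ^ j)
        = ∑ m ∈ range (j + 1), (j.choose m : ℚ) *
            PowerSeries.coeff n ((PowerSeries.exp ℚ - 1) ^ m) := by
      conv_lhs => rw [show PowerSeries.exp ℚ = (PowerSeries.exp ℚ - 1) + 1 by ring, add_pow]
      rw [map_sum]
      refine Finset.sum_congr rfl fun m _ => ?_
      rw [one_pow, mul_one, ← map_natCast (PowerSeries.C (R := ℚ)) (j.choose m),
        PowerSeries.coeff_mul_C]
      ring
    have hlhs : ∑ m ∈ range (n + 1), (j.choose m : ℚ) * b m = (j : ℚ) ^ n := by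
      have h1 : ∑ m ∈ range (j + 1), (j.choose m : ℚ) * b m
          = (n.factorial : ℚ) * PowerSeries.coeff n (PowerSeries.exp ℚ ^ j) := by
        rw [hbin, Finset.mul_sum]
        refine Finset.sum_congr rfl fun m _ => ?_
        rw [hbdef]
        ring
      have h2 : ∑ m ∈ range (n + 1), (j.choose m : ℚ) * b m
          = ∑ m ∈ range (n + j + 2), (j.choose m : ℚ) * b m :=
        Finset.sum_subset (Finset.range_subset_range.mpr (by omega)) fun m _ hm => by
          rw [hb0 m (by simp only [Finset.mem_range] at hm; omega), mul_zero]
      have h3 : ∑ m ∈ range (j + 1), (j.choose m : ℚ) * b m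
          = ∑ m ∈ range (n + j + 2), (j.choose m : ℚ) * b m :=
        Finset.sum_subset (Finset.range_subset_range.mpr (by omega)) fun m _ hm => by
          rw [Nat.choose_eq_zero_of_lt (by simp only [Finset.mem_range] at hm; omega)]
          simp
      rw [h2, ← h3, h1, hexp]
      have : (n.factorial : ℚ) ≠ 0 := Nat.cast_ne_zero.mpr (Nat.factorial_ne_zero n)
      field_simp
    rw [hlhs, hrhs]
  rcases le_or_gt r n with h | h
  · exact invert_aux n b s heq r h
  · rw [show (n.factorial : ℚ) * PowerSeries.coeff n ((PowerSeries.exp ℚ - 1) ^ r) = b r from rfl,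
      hb0 r h, stirS2_eq_zero h]
    simp


lemma constantCoeff_comp1 (f g : PowerSeries ℚ) :
    PowerSeries.constantCoeff (comp1 f g) = PowerSeries.coeff 0 f := by
  rw [← PowerSeries.coeff_zero_eq_constantCoeff_apply, coeff_comp1]
  simp


lemma constantCoeff_expIter : ∀ k, PowerSeries.constantCoeff (expIter k) = 0
  | 0 => constantCoeff_E0
  | k + 1 => by
    rw [expIter, map_sub, constantCoeff_comp1, map_one,
      PowerSeries.coeff_zero_eq_constantCoeff_apply, PowerSeries.constantCoeff_exp, sub_self]


lemma expIter_succ (k : ℕ) :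
    expIter (k + 1) = comp1 (PowerSeries.exp ℚ - 1) (expIter k) := by
  rw [expIter, comp1_sub, comp1_one]


lemma Tnum_eq_zero : ∀ (k : ℕ) {n r : ℕ}, n < r → Tnum n k r = 0
  | 0, n, r, h => by rw [Tnum]; exact if_neg (by omega)
  | k + 1, n, r, h => by rw [Tnum, Finset.Icc_eq_empty (by omega), Finset.sum_empty]


lemma Tnum_one (n r : ℕ) : Tnum n 1 r = stirS2 n r := by
  rw [Tnum]
  rcases le_or_gt r n with h | h
  · rw [Finset.sum_eq_single r (fun m _ hmr => by rw [Tnum, if_neg hmr, mul_zero])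
      (fun hr => absurd (Finset.mem_Icc.mpr ⟨le_refl r, h⟩) hr)]
    rw [Tnum, if_pos rfl, mul_one]
  · rw [Finset.Icc_eq_empty (by omega), Finset.sum_empty, stirS2_eq_zero h]


lemma Tswap : ∀ (k n r : ℕ),
    Tnum n (k + 1) r = ∑ m ∈ Finset.Icc r n, Tnum n k m * stirS2 m r := by
  intro k
  induction k with
  | zero =>
    intro n r
    rw [Tnum_one]
    rcases le_or_gt r n with h | h
    · rw [Finset.sum_eq_single n (fun m hm hmn => by rw [Tnum, if_neg (Ne.symm hmn), zero_mul])
        (fun hn => absurd (Finset.mem_Icc.mpr ⟨h, le_refl n⟩) hn)]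
      rw [Tnum, if_pos rfl, one_mul]
    · rw [Finset.Icc_eq_empty (by omega), Finset.sum_empty, stirS2_eq_zero h]
  | succ k ih =>
    intro n r
    rw [Tnum]
    have step1 : ∀ m ∈ Finset.Icc r n,
        stirS2 n m * Tnum m (k + 1) r
          = ∑ p ∈ Finset.Icc r n, stirS2 n m * (Tnum m k p * stirS2 p r) := by
      intro m hm
      rw [Finset.mem_Icc] at hm
      rw [ih m r, Finset.mul_sum]
      exact Finset.sum_subset (Finset.Icc_subset_Icc_right hm.2) fun p hp hp' => by
        rw [Finset.mem_Icc] at hp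
        have h1 : m < p := by
          by_contra h2
          exact hp' (Finset.mem_Icc.mpr ⟨hp.1, by omega⟩)
        rw [Tnum_eq_zero k h1, zero_mul, mul_zero]
    rw [Finset.sum_congr rfl step1, Finset.sum_comm]
    refine Finset.sum_congr rfl fun p hp => ?_
    rw [Finset.mem_Icc] at hp
    have step2 : ∑ m ∈ Finset.Icc r n, stirS2 n m * (Tnum m k p * stirS2 p r)
        = ∑ m ∈ Finset.Icc p n, stirS2 n m * Tnum m k p * stirS2 p r := by
      rw [← Finset.sum_subset (Finset.Icc_subset_Icc_left hp.1) (fun m hm hm' => by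
        have h1 : m < p := by
          rw [Finset.mem_Icc] at hm
          by_contra h2
          exact hm' (Finset.mem_Icc.mpr ⟨by omega, hm.2⟩)
        rw [Tnum_eq_zero k h1, zero_mul, mul_zero])]
      exact Finset.sum_congr rfl fun m _ => by ring
    rw [step2, ← Finset.sum_mul, ← Tnum]


lemma main_ind : ∀ (k n r : ℕ), (r.factorial : ℚ) * Tnum n (k + 1) r
    = n.factorial * PowerSeries.coeff n (expIter k ^ r) := by
  intro k
  induction k with
  | zero =>
    intro n r
    rw [Tnum_one, show expIter 0 = PowerSeries.exp ℚ - 1 from rfl]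
    exact (base_coeff n r).symm
  | succ k ih =>
    intro n r
    have hE := constantCoeff_expIter k
    rw [expIter_succ, ← comp1_pow hE, coeff_comp1, Finset.mul_sum]
    have hterm : ∀ m, (n.factorial : ℚ) *
        (PowerSeries.coeff m ((PowerSeries.exp ℚ - 1) ^ r) *
          PowerSeries.coeff n (expIter k ^ m))
        = (r.factorial : ℚ) * ((Tnum n (k + 1) m : ℚ) * stirS2 m r) := by
      intro m
      have h1 := base_coeff m r
      have h2 := ih n m
      calc (n.factorial : ℚ) * (PowerSeries.coeff m ((PowerSeries.exp ℚ - 1) ^ r) *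
              PowerSeries.coeff n (expIter k ^ m))
          = PowerSeries.coeff m ((PowerSeries.exp ℚ - 1) ^ r) *
              ((m.factorial : ℚ) * Tnum n (k + 1) m) := by rw [h2]; ring
        _ = ((m.factorial : ℚ) * PowerSeries.coeff m ((PowerSeries.exp ℚ - 1) ^ r)) *
              Tnum n (k + 1) m := by ring
        _ = ((r.factorial : ℚ) * stirS2 m r) * Tnum n (k + 1) m := by rw [h1]
        _ = (r.factorial : ℚ) * ((Tnum n (k + 1) m : ℚ) * stirS2 m r) := by ring
    rw [Finset.sum_congr rfl (fun m _ => hterm m), ← Finset.mul_sum]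
    congr 1
    have hsub : ∑ m ∈ Finset.range (n + 1), (Tnum n (k + 1) m : ℚ) * stirS2 m r
        = ∑ m ∈ Finset.Icc r n, (Tnum n (k + 1) m : ℚ) * stirS2 m r := by
      symm
      apply Finset.sum_subset
      · intro m hm
        rw [Finset.mem_Icc] at hm
        exact Finset.mem_range.mpr (by omega)
      · intro m hm hm'
        rcases le_or_gt r m with h | h
        · exact absurd (Finset.mem_Icc.mpr
            ⟨h, by rw [Finset.mem_range] at hm; omega⟩) hm'
        · rw [stirS2_eq_zero h, Nat.cast_zero, mul_zero]
    rw [hsub]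
    have := Tswap (k + 1) n r
    have hcast := congrArg (Nat.cast : ℕ → ℚ) this
    push_cast at hcast
    rw [hcast]


/-- `exp⁽ᵏ⁾(x,y) = exp(y ⬝ exp⁽ᵏ⁻¹⁾(x))` in `ℚ[[x,y]]`, for `k ≥ 1`. -/
noncomputable def expXY (k : ℕ) : MvPowerSeries (Fin 2) ℚ :=
  comp2 (PowerSeries.exp ℚ) (MvPowerSeries.X 1 * toX (expIter (k - 1)))

lemma coeff_expXY (k : ℕ) (e : Fin 2 →₀ ℕ) :
    MvPowerSeries.coeff e (expXY k)
      = (1 / ((e 1).factorial : ℚ)) *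
          PowerSeries.coeff (e 0) (expIter (k - 1) ^ (e 1)) := by
  have hdef : MvPowerSeries.coeff e (expXY k) = ∑ m ∈ Finset.range (e 0 + e 1 + 1),
      PowerSeries.coeff m (PowerSeries.exp ℚ) *
        MvPowerSeries.coeff e ((MvPowerSeries.X 1 * toX (expIter (k - 1))) ^ m) := rfl
  rw [hdef, Finset.sum_congr rfl (fun m _ => by rw [G_pow, coeff_Ypow_mul_toX])]
  rw [Finset.sum_eq_single (e 1) (fun m _ hm => by rw [if_neg (Ne.symm hm), mul_zero])
    (fun hmem => absurd (Finset.mem_range.mpr (by omega)) hmem)]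
  rw [if_pos rfl, PowerSeries.coeff_exp]
  simp

/-- The series `∑_{n,r ≥ 0} T(n,k,r) (xⁿ/n!) yʳ ∈ ℚ[[x,y]]`. -/
noncomputable def Tgen (k : ℕ) : MvPowerSeries (Fin 2) ℚ :=
  fun e => (Tnum (e 0) k (e 1) : ℚ) / (e 0).factorial

/-- For every `k ≥ 1`, `∑_{n,r ≥ 0} T(n,k,r) (xⁿ/n!) yʳ = exp⁽ᵏ⁾(x,y)`
as formal power series in `ℚ[[x,y]]`. -/
theorem egf_T_eq_expXY (k : ℕ) (hk : 1 ≤ k) : Tgen k = expXY k := by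
  obtain ⟨k', rfl⟩ : ∃ k', k = k' + 1 := ⟨k - 1, by omega⟩
  funext e
  have hco := coeff_expXY (k' + 1) e
  have hmain := main_ind k' (e 0) (e 1)
  have h1 : Tgen (k' + 1) e = (Tnum (e 0) (k' + 1) (e 1) : ℚ) / (e 0).factorial := rfl
  have h2 : MvPowerSeries.coeff e (expXY (k' + 1)) = expXY (k' + 1) e := rfl
  rw [show k' + 1 - 1 = k' from rfl] at hco
  rw [h1, ← h2, hco]
  have hn : ((e 0).factorial : ℚ) ≠ 0 := Nat.cast_ne_zero.mpr (Nat.factorial_ne_zero _)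
  have hr : ((e 1).factorial : ℚ) ≠ 0 := Nat.cast_ne_zero.mpr (Nat.factorial_ne_zero _)
  field_simp
  linear_combination hmain
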